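/- Let b : X × Y → [-∞,∞] be a kernel, B f(x) = sup_y (b(x,y) − f(y)) and B° h(y) = sup_x (b(x,y) − h(x)) with −∞ absorbing, and let G = Rg(B). Then for all x ∈ X and y ∈ Y: B° e_x (y) = b(x,y), and e_x = B(b(x,·)) = sup_{y ∈ Y} (b(·,y) − b(x,y)), where e_x = sup_{u ∈ G} (u(·) − u(x)). -/

import Mathlib

/-- The Fenchel–Moreau type conjugation `B f(x) = sup_y (b(x,y) − f(y))`. -/
noncomputable def Bop {X Y : Type*} (b : X → Y → EReal) (f : Y → EReal) : X → EReal :=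
  fun x => ⨆ y, (b x y - f y)

/-- The transpose conjugation `B° h(y) = sup_x (b(x,y) − h(x))`. -/
noncomputable def BopT {X Y : Type*} (b : X → Y → EReal) (h : X → EReal) : Y → EReal :=
  fun y => ⨆ x, (b x y - h x)

/-- `Rg(B) = { sup_y (a_y + b(·,y)) | a_y ∈ [-∞,∞) }`. -/
def RgB {X Y : Type*} (b : X → Y → EReal) : Set (X → EReal) :=
  {g | ∃ a : Y → EReal, (∀ y, a y ≠ ⊤) ∧ g = fun x => ⨆ y, (a y + b x y)}

/-- `e_x(z) = sup_{u ∈ Rg(B)} (u(z) − u(x))`. -/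
noncomputable def eKer {X Y : Type*} (b : X → Y → EReal) (x : X) : X → EReal :=
  fun z => ⨆ u ∈ RgB b, (u z - u x)

private lemma aux1 (c d : EReal) : c - (c - d) ≤ d := by
  induction c <;> induction d <;> simp_all [← EReal.coe_sub]

private lemma aux2 (c : EReal) : c - c ≤ 0 := by
  induction c <;> simp [← EReal.coe_sub]

private lemma aux3 (r : ℝ) (c d : EReal) : ((r : EReal) + c) - ((r : EReal) + d) ≤ c - d := by
  induction c <;> induction d <;>
    simp_all [← EReal.coe_sub, ← EReal.coe_add]

private lemma aux4 {ι : Sort*} (f : ι → EReal) (c : EReal) :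
    (⨆ i, f i) - c ≤ ⨆ i, (f i - c) := by
  induction c with
  | bot =>
    rcases eq_or_ne (⨆ i, f i) ⊥ with h | h
    · simp [h]
    · obtain ⟨i, hi⟩ : ∃ i, f i ≠ ⊥ := by
        by_contra hc
        push_neg at hc
        exact h (iSup_eq_bot.mpr hc)
      have htop : (⊤ : EReal) ≤ ⨆ i, (f i - ⊥) :=
        (EReal.sub_bot hi) ▸ le_iSup (fun i => f i - ⊥) i
      exact le_top.trans htop
  | coe r =>
    apply EReal.sub_le_of_le_add
    refine iSup_le fun i => ?_
    have h : f i - (r : EReal) + r = f i := by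
      rw [sub_eq_add_neg, add_assoc, ← EReal.coe_neg, ← EReal.coe_add]
      simp
    calc f i = (f i - (r : EReal)) + r := h.symm
      _ ≤ (⨆ i, (f i - (r : EReal))) + r :=
          add_le_add_left (le_iSup (fun i => f i - (r : EReal)) i) _
  | top => simp [EReal.sub_top]

private lemma mem_RgB {X Y : Type*} (b : X → Y → EReal) (y' : Y) :
    (fun z => b z y') ∈ RgB b := by
  classical
  refine ⟨fun y => if y = y' then 0 else ⊥, fun y => by by_cases h : y = y' <;> simp [h], ?_⟩
  funext z
  apply le_antisymm
  · have := le_iSup (fun y => (if y = y' then (0 : EReal) else ⊥) + b z y) y'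
    simpa using this
  · refine iSup_le fun y => ?_
    by_cases h : y = y'
    · subst h; simp
    · simp [h]

theorem stmt7 {X Y : Type*} [Nonempty X] [Nonempty Y] (b : X → Y → EReal) :
    ∀ (x : X) (y : Y),
      BopT b (eKer b x) y = b x y ∧
      eKer b x = Bop b (fun y' => b x y') ∧
      eKer b x = fun z => ⨆ y', (b z y' - b x y') := by
  intro x y
  have key : eKer b x = fun z => ⨆ y', (b z y' - b x y') := by
    funext z
    apply le_antisymm
    · refine iSup₂_le ?_
      rintro u ⟨a, ha, rfl⟩
      simp only
      refine le_trans (aux4 _ _) (iSup_le fun y' => ?_)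
      rcases eq_or_ne (a y') ⊥ with h | h
      · simp [h]
      · have hr : ((a y').toReal : EReal) = a y' := EReal.coe_toReal (ha y') h
        rw [← hr]
        calc ((a y').toReal : EReal) + b z y' - (⨆ y'', a y'' + b x y'')
            ≤ ((a y').toReal : EReal) + b z y' - (a y' + b x y') :=
              EReal.sub_le_sub le_rfl (le_iSup (fun y'' => a y'' + b x y'') y')
          _ = ((a y').toReal : EReal) + b z y' - (((a y').toReal : EReal) + b x y') := by
              rw [hr]
          _ ≤ b z y' - b x y' := aux3 _ _ _
          _ ≤ ⨆ y', (b z y' - b x y') := le_iSup (fun y' => b z y' - b x y') y'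
    · refine iSup_le fun y' => ?_
      exact le_iSup₂ (f := fun u (_ : u ∈ RgB b) => u z - u x) (fun z' => b z' y')
        (mem_RgB b y')
  have h1 : BopT b (eKer b x) y = b x y := by
    apply le_antisymm
    · refine iSup_le fun z => ?_
      have h2 : b z y - b x y ≤ eKer b x z := by
        rw [key]; exact le_iSup (fun y' => b z y' - b x y') y
      calc b z y - eKer b x z ≤ b z y - (b z y - b x y) := EReal.sub_le_sub le_rfl h2
        _ ≤ b x y := aux1 _ _
    · have h3 : eKer b x x ≤ 0 := by
        rw [key]; exact iSup_le fun y' => aux2 _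
      calc b x y = b x y - 0 := by simp [sub_eq_add_neg]
        _ ≤ b x y - eKer b x x := EReal.sub_le_sub le_rfl h3
        _ ≤ BopT b (eKer b x) y := le_iSup (fun z => b z y - eKer b x z) x
  exact ⟨h1, key, key⟩
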